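/- Let V = ⊕_{i∈ℤ}(ℂ[∂]x_i ⊕ ℂ[∂]y_i) with the actions L_i _λ x_j = (∂+aλ+b)x_{i+j}, L_i _λ y_j = (∂+(a+1/2)λ+b)y_{i+j}, G_i _λ x_j = y_{i+j}, G_i _λ y_j = (∂+2aλ+b)x_{i+j} (a,b ∈ ℂ). Then V is a ℤ-graded conformal module over the loop super-Virasoro conformal superalgebra, with i-th graded piece ℂ[∂]x_i ⊕ ℂ[∂]y_i. -/
import Mathlib


open Polynomial

/-- Substitution `∂ ↦ ∂ + λ`. -/
noncomputable def sh (l : ℂ) (f : Polynomial ℂ) : Polynomial ℂ :=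
  f.comp (Polynomial.X + Polynomial.C l)

/-- The free `ℤ`-graded `ℂ[∂]`-module `V = ⊕_{j∈ℤ}(ℂ[∂]x_j ⊕ ℂ[∂]y_j)`: the first
component records the coefficients of the (even) `x_j`, the second those of the
(odd) `y_j`. -/
abbrev VG := (ℤ →₀ Polynomial ℂ) × (ℤ →₀ Polynomial ℂ)

/-- The `λ`-action of `L_i` on `M'_{a,b}`: `L_i ₗ x_j = (∂+aλ+b)x_{i+j}`,
`L_i ₗ y_j = (∂+(a+1/2)λ+b)y_{i+j}`. -/
noncomputable def Lg (a b : ℂ) (i : ℤ) (l : ℂ) (v : VG) : VG :=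
  (Finsupp.mapDomain (i + ·)
      (v.1.mapRange (fun f => sh l f * (Polynomial.X + Polynomial.C (a*l + b)))
        (by simp [sh])),
   Finsupp.mapDomain (i + ·)
      (v.2.mapRange (fun f => sh l f * (Polynomial.X + Polynomial.C ((a + 1/2)*l + b)))
        (by simp [sh])))

/-- The `λ`-action of `G_i` on `M'_{a,b}`: `G_i ₗ x_j = y_{i+j}`,
`G_i ₗ y_j = (∂+2aλ+b)x_{i+j}`. -/
noncomputable def Gg (a b : ℂ) (i : ℤ) (l : ℂ) (v : VG) : VG :=
  (Finsupp.mapDomain (i + ·)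
      (v.2.mapRange (fun f => sh l f * (Polynomial.X + Polynomial.C (2*a*l + b)))
        (by simp [sh])),
   Finsupp.mapDomain (i + ·) (v.1.mapRange (sh l) (by simp [sh])))

lemma mapDomain_add_apply (i k : ℤ) (w : ℤ →₀ Polynomial ℂ) :
    (Finsupp.mapDomain (i + ·) w) k = w (k - i) := by
  have h : Function.Injective (i + · : ℤ → ℤ) := fun x y h => by simpa using h
  have := Finsupp.mapDomain_apply h w (k - i)
  simpa using this

lemma supp_helper (i j : ℤ) (g : Polynomial ℂ → Polynomial ℂ) (hg : g 0 = 0)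
    (w : ℤ →₀ Polynomial ℂ) (h : w.support ⊆ {j}) :
    (Finsupp.mapDomain (i + ·) (w.mapRange g hg)).support ⊆ {i + j} := by
  intro k hk
  have h1 := Finsupp.mapDomain_support hk
  obtain ⟨t, ht, rfl⟩ := Finset.mem_image.1 h1
  have h2 := h (Finsupp.support_mapRange ht)
  simp only [Finset.mem_singleton] at h2 ⊢
  omega

/-- `M'_{a,b}` is a `ℤ`-graded conformal module over the loop
super-Virasoro conformal superalgebra: the conformal Jacobi identities hold, and the
`λ`-actions of `L_i`, `G_i` send the `j`-th graded piece `ℂ[∂]x_j ⊕ ℂ[∂]y_j` into the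
`(i+j)`-th graded piece. -/
theorem stmt17 (a b : ℂ) :
    (∀ (i j : ℤ) (l m : ℂ) (v : VG),
        (l - m) • Lg a b (i+j) (l+m) v = Lg a b i l (Lg a b j m v) - Lg a b j m (Lg a b i l v)
      ∧ ((1/2)*l - m) • Gg a b (i+j) (l+m) v
          = Lg a b i l (Gg a b j m v) - Gg a b j m (Lg a b i l v)
      ∧ (2 : ℂ) • Lg a b (i+j) (l+m) v
          = Gg a b i l (Gg a b j m v) + Gg a b j m (Gg a b i l v))
    ∧ (∀ (i j : ℤ) (l : ℂ) (v : VG), v.1.support ⊆ {j} → v.2.support ⊆ {j} →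
        (Lg a b i l v).1.support ⊆ {i + j} ∧ (Lg a b i l v).2.support ⊆ {i + j}
      ∧ (Gg a b i l v).1.support ⊆ {i + j} ∧ (Gg a b i l v).2.support ⊆ {i + j}) := by
  constructor
  · intro i j l m v
    refine ⟨?_, ?_, ?_⟩ <;>
    · refine Prod.ext (Finsupp.ext fun k => ?_) (Finsupp.ext fun k => ?_) <;>
      · simp only [Lg, Gg, Prod.smul_fst, Prod.smul_snd, Prod.fst_sub, Prod.snd_sub,
          Prod.fst_add, Prod.snd_add, Finsupp.smul_apply, Finsupp.sub_apply,
          Finsupp.add_apply, mapDomain_add_apply, Finsupp.mapRange_apply, sub_sub]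
        apply Polynomial.funext
        intro x
        simp [sh, Polynomial.eval_comp, Polynomial.smul_eq_C_mul]
        ring_nf
  · intro i j l v h1 h2
    exact ⟨supp_helper i j _ _ v.1 h1, supp_helper i j _ _ v.2 h2,
      supp_helper i j _ _ v.2 h2, supp_helper i j _ _ v.1 h1⟩
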